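/- For every integer n ≥ 1, the number of Catalan words of length n having no valleys equals the Fibonacci number F_{2n-1}, where F_1 = F_2 = 1. -/

import Mathlib

/-- The set of Catalan words of length `n`: words `w` over ℕ with `w 1 = 0` and
`w (i+1) ≤ w i + 1` for all `i`. -/
def CatalanWord (n : ℕ) : Set (List ℕ) :=
  {w | w.length = n ∧ w.getD 0 0 = 0 ∧
    ∀ i, i + 1 < n → w.getD (i + 1) 0 ≤ w.getD i 0 + 1}

/-- Number of `l`-valleys of `w`: occurrences of a factor `a b^l (b+1)` with `a > b`. -/
def lValleys (l : ℕ) (w : List ℕ) : ℕ :=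
  ((Finset.range w.length).filter (fun i =>
    i + l + 1 < w.length ∧
    w.getD (i + 1) 0 < w.getD i 0 ∧
    (∀ j, j < l → w.getD (i + 1 + j) 0 = w.getD (i + 1) 0) ∧
    w.getD (i + l + 1) 0 = w.getD (i + 1) 0 + 1)).card

/-- Total number of valleys of `w` (that is, `l`-valleys for all `l ≥ 1`). -/
def valleys (w : List ℕ) : ℕ :=
  ∑ l ∈ Finset.Icc 1 w.length, lValleys l w



/-- ascending words: length k+1, start v, steps in {0,+1} -/
def ascF : ℕ → ℕ → Finset (List ℕ)
  | v, 0 => {[v]}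
  | v, k+1 => ((ascF v k) ∪ (ascF (v+1) k)).image (v :: ·)

/-- nonincreasing words: length r, values ≤ b -/
def descF : ℕ → ℕ → Finset (List ℕ)
  | _, 0 => {[]}
  | b, r+1 => (Finset.range (b+1)).biUnion fun v => (descF v r).image (v :: ·)

/-- nonincreasing words: length r, values < m -/
def descLt : ℕ → ℕ → Finset (List ℕ)
  | _, 0 => {[]}
  | m, r+1 => (Finset.range m).biUnion fun v => (descF v r).image (v :: ·)

lemma vc_chain {L : List ℕ} (h : ∀ i, i + 1 < L.length → L.getD (i+1) 0 ≤ L.getD i 0) :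
    ∀ i j, i ≤ j → j < L.length → L.getD j 0 ≤ L.getD i 0 := by
  intro i j hij
  induction j, hij using Nat.le_induction with
  | base => intro _; exact le_rfl
  | succ j hij ih => intro hj; exact (h j hj).trans (ih (by omega))

lemma ascF_mem : ∀ (k v : ℕ) (L : List ℕ),
    L ∈ ascF v k ↔ L.length = k + 1 ∧ L.getD 0 0 = v ∧
      ∀ i < k, L.getD i 0 ≤ L.getD (i+1) 0 ∧ L.getD (i+1) 0 ≤ L.getD i 0 + 1
  | 0, v, L => by
    constructor
    · intro h
      simp only [ascF, Finset.mem_singleton] at h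
      subst h; simp
    · rintro ⟨hlen, h0, -⟩
      match L with
      | [a] => simp only [List.getD_cons_zero] at h0; subst h0; simp [ascF]
  | (k+1), v, L => by
    simp only [ascF, Finset.mem_image, Finset.mem_union]
    constructor
    · rintro ⟨rest, hrest, rfl⟩
      rcases hrest with h | h <;> rw [ascF_mem] at h <;>
        obtain ⟨hlen, h0, hstep⟩ := h
      · refine ⟨by simp [hlen], rfl, ?_⟩
        intro i hi
        cases i with
        | zero => simp only [List.getD_cons_zero, List.getD_cons_succ, h0]; omega
        | succ j =>
          simpa using hstep j (by omega)
      · refine ⟨by simp [hlen], rfl, ?_⟩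
        intro i hi
        cases i with
        | zero => simp only [List.getD_cons_zero, List.getD_cons_succ, h0]; omega
        | succ j =>
          simpa using hstep j (by omega)
    · rintro ⟨hlen, h0, hstep⟩
      match L with
      | a :: rest =>
        simp only [List.getD_cons_zero] at h0; subst h0
        refine ⟨rest, ?_, rfl⟩
        have h1 := hstep 0 (by omega)
        simp only [List.getD_cons_zero, List.getD_cons_succ] at h1
        have hr : rest.getD 0 0 = a ∨ rest.getD 0 0 = a + 1 := by omega
        have hlen' : rest.length = k + 1 := by simpa using hlen
        have hsteps : ∀ i < k, rest.getD i 0 ≤ rest.getD (i+1) 0 ∧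
            rest.getD (i+1) 0 ≤ rest.getD i 0 + 1 := by
          intro i hi
          simpa using hstep (i+1) (by omega)
        rcases hr with hr | hr
        · exact Or.inl ((ascF_mem k a rest).mpr ⟨hlen', hr, hsteps⟩)
        · exact Or.inr ((ascF_mem k (a+1) rest).mpr ⟨hlen', hr, hsteps⟩)

lemma descF_mem : ∀ (r b : ℕ) (L : List ℕ),
    L ∈ descF b r ↔ L.length = r ∧
      (∀ i, i + 1 < r → L.getD (i+1) 0 ≤ L.getD i 0) ∧ (∀ i < r, L.getD i 0 ≤ b)
  | 0, b, L => by
    simp only [descF, Finset.mem_singleton]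
    constructor
    · rintro rfl; simp
    · rintro ⟨hlen, -, -⟩; exact List.length_eq_zero_iff.mp hlen
  | (r+1), b, L => by
    simp only [descF, Finset.mem_biUnion, Finset.mem_image, Finset.mem_range]
    constructor
    · rintro ⟨v, hv, rest, hrest, rfl⟩
      rw [descF_mem] at hrest
      obtain ⟨hlen, hanti, hbd⟩ := hrest
      refine ⟨by simp [hlen], ?_, ?_⟩
      · intro i hi
        cases i with
        | zero =>
          simp only [List.getD_cons_zero, List.getD_cons_succ]
          exact hbd 0 (by omega)
        | succ j => simpa using hanti j (by omega)
      · intro i hi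
        cases i with
        | zero => simpa using by omega
        | succ j =>
          simp only [List.getD_cons_succ]
          exact le_trans (hbd j (by omega)) (by omega)
    · rintro ⟨hlen, hanti, hbd⟩
      match L with
      | a :: rest =>
        have ha : a < b + 1 := by
          have h := hbd 0 (by omega)
          simp only [List.getD_cons_zero] at h; omega
        refine ⟨a, ha, rest, ?_, rfl⟩
        rw [descF_mem]
        have hlen' : rest.length = r := by simpa using hlen
        refine ⟨hlen', ?_, ?_⟩
        · intro i hi; simpa using hanti (i+1) (by omega)
        · intro i hi
          have := vc_chain (L := a :: rest) ?_ 0 (i+1) (by omega) (by simp [hlen']; omega)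
          · simpa using this
          · intro i hi
            exact hanti i (by simpa [hlen'] using hi)

lemma descLt_mem : ∀ (r m : ℕ) (L : List ℕ),
    L ∈ descLt m r ↔ L.length = r ∧
      (∀ i, i + 1 < r → L.getD (i+1) 0 ≤ L.getD i 0) ∧ (∀ i < r, L.getD i 0 < m)
  | 0, m, L => by
    simp only [descLt, Finset.mem_singleton]
    constructor
    · rintro rfl; simp
    · rintro ⟨hlen, -, -⟩; exact List.length_eq_zero_iff.mp hlen
  | (r+1), m, L => by
    simp only [descLt, Finset.mem_biUnion, Finset.mem_image, Finset.mem_range]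
    constructor
    · rintro ⟨v, hv, rest, hrest, rfl⟩
      rw [descF_mem] at hrest
      obtain ⟨hlen, hanti, hbd⟩ := hrest
      refine ⟨by simp [hlen], ?_, ?_⟩
      · intro i hi
        cases i with
        | zero =>
          simp only [List.getD_cons_zero, List.getD_cons_succ]
          exact hbd 0 (by omega)
        | succ j => simpa using hanti j (by omega)
      · intro i hi
        cases i with
        | zero => simpa using hv
        | succ j =>
          simp only [List.getD_cons_succ]
          exact lt_of_le_of_lt (hbd j (by omega)) hv
    · rintro ⟨hlen, hanti, hbd⟩
      match L with
      | a :: rest =>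
        have ha : a < m := by simpa using hbd 0 (by omega)
        refine ⟨a, ha, rest, ?_, rfl⟩
        rw [descF_mem]
        have hlen' : rest.length = r := by simpa using hlen
        refine ⟨hlen', ?_, ?_⟩
        · intro i hi; simpa using hanti (i+1) (by omega)
        · intro i hi
          have := vc_chain (L := a :: rest) ?_ 0 (i+1) (by omega) (by simp [hlen']; omega)
          · simpa using this
          · intro i hi
            exact hanti i (by simpa [hlen'] using hi)

lemma vc_getD_append_left {A D : List ℕ} {i : ℕ} (h : i < A.length) :
    (A ++ D).getD i 0 = A.getD i 0 := by
  rw [List.getD_eq_getElem?_getD, List.getD_eq_getElem?_getD, List.getElem?_append, if_pos h]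

lemma vc_getD_append_right {A D : List ℕ} {i : ℕ} (h : A.length ≤ i) :
    (A ++ D).getD i 0 = D.getD (i - A.length) 0 := by
  rw [List.getD_eq_getElem?_getD, List.getD_eq_getElem?_getD,
    List.getElem?_append_right h]

lemma vc_getD_take {L : List ℕ} {i n : ℕ} (h : i < n) :
    (L.take n).getD i 0 = L.getD i 0 := by
  rw [List.getD_eq_getElem?_getD, List.getD_eq_getElem?_getD, List.getElem?_take, if_pos h]

lemma vc_getD_drop (L : List ℕ) (n i : ℕ) :
    (L.drop n).getD i 0 = L.getD (n + i) 0 := by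
  rw [List.getD_eq_getElem?_getD, List.getD_eq_getElem?_getD, List.getElem?_drop]

lemma vc_getLastD (L : List ℕ) (h : L ≠ []) : L.getLastD 0 = L.getD (L.length - 1) 0 := by
  rw [List.getLastD_eq_getLast?, List.getLast?_eq_getElem?, List.getD_eq_getElem?_getD]

/-- structural description of valleyless Catalan words of length N+1 -/
def Struct (N : ℕ) (w : List ℕ) : Prop :=
  w.length = N + 1 ∧ w.getD 0 0 = 0 ∧ ∃ t, t ≤ N ∧
    (∀ i < t, w.getD i 0 ≤ w.getD (i+1) 0 ∧ w.getD (i+1) 0 ≤ w.getD i 0 + 1) ∧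
    (∀ i, t ≤ i → i < N → w.getD (i+1) 0 ≤ w.getD i 0) ∧
    (t < N → w.getD (t+1) 0 < w.getD t 0)

lemma vc_desc_chain {N t : ℕ} {w : List ℕ}
    (hdesc : ∀ i, t ≤ i → i < N → w.getD (i+1) 0 ≤ w.getD i 0) :
    ∀ a b, t ≤ a → a ≤ b → b ≤ N → w.getD b 0 ≤ w.getD a 0 := by
  intro a b ha hab
  induction b, hab using Nat.le_induction with
  | base => intro _; exact le_rfl
  | succ b hab ih => intro hb; exact (hdesc b (by omega) (by omega)).trans (ih (by omega))

/-- the finset of valleyless Catalan words of length N + 1 -/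
def WF (N : ℕ) : Finset (List ℕ) :=
  (Finset.range (N+1)).biUnion fun t =>
    (ascF 0 t).biUnion fun A => (descLt (A.getLastD 0) (N - t)).image (fun D => A ++ D)

lemma WF_mem_struct {N : ℕ} {w : List ℕ} : w ∈ WF N ↔ Struct N w := by
  simp only [WF, Finset.mem_biUnion, Finset.mem_image, Finset.mem_range]
  constructor
  · rintro ⟨t, ht, A, hA, D, hD, rfl⟩
    have ht' : t ≤ N := by omega
    rw [ascF_mem] at hA
    obtain ⟨hAlen, hA0, hAstep⟩ := hA
    rw [descLt_mem] at hD
    obtain ⟨hDlen, hDanti, hDlt⟩ := hD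
    have hAne : A ≠ [] := by intro h; rw [h] at hAlen; simp at hAlen
    have hm : A.getLastD 0 = A.getD t 0 := by
      rw [vc_getLastD A hAne, hAlen]; norm_num
    rw [hm] at hDlt
    have hwlen : (A ++ D).length = N + 1 := by
      rw [List.length_append, hAlen, hDlen]; omega
    refine ⟨hwlen, ?_, t, ht', ?_, ?_, ?_⟩
    · rw [vc_getD_append_left (by omega)]; exact hA0
    · intro i hi
      have e1 : (A ++ D).getD i 0 = A.getD i 0 := vc_getD_append_left (by omega)
      have e2 : (A ++ D).getD (i+1) 0 = A.getD (i+1) 0 := vc_getD_append_left (by omega)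
      rw [e1, e2]
      exact hAstep i hi
    · intro i hti hiN
      by_cases heq : i = t
      · subst heq
        have e1 : (A ++ D).getD i 0 = A.getD i 0 := vc_getD_append_left (by omega)
        have e2 : (A ++ D).getD (i+1) 0 = D.getD (i + 1 - A.length) 0 :=
          vc_getD_append_right (by omega)
        have e3 : i + 1 - A.length = 0 := by omega
        rw [e1, e2, e3]
        exact le_of_lt (hDlt 0 (by omega))
      · have e1 : (A ++ D).getD i 0 = D.getD (i - A.length) 0 :=
          vc_getD_append_right (by omega)
        have e2 : (A ++ D).getD (i+1) 0 = D.getD (i + 1 - A.length) 0 :=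
          vc_getD_append_right (by omega)
        have e3 : i + 1 - A.length = (i - A.length) + 1 := by omega
        rw [e1, e2, e3]
        exact hDanti (i - A.length) (by omega)
    · intro htN
      have e1 : (A ++ D).getD t 0 = A.getD t 0 := vc_getD_append_left (by omega)
      have e2 : (A ++ D).getD (t+1) 0 = D.getD (t + 1 - A.length) 0 :=
        vc_getD_append_right (by omega)
      have e3 : t + 1 - A.length = 0 := by omega
      rw [e1, e2, e3]
      exact hDlt 0 (by omega)
  · rintro ⟨hlen, h0, t, ht, hasc, hdesc, hstrict⟩
    refine ⟨t, by omega, w.take (t+1), ?_, w.drop (t+1), ?_, List.take_append_drop (t+1) w⟩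
    · rw [ascF_mem]
      refine ⟨by rw [List.length_take]; omega, ?_, ?_⟩
      · rw [vc_getD_take (by omega)]; exact h0
      · intro i hi
        have e1 : (w.take (t+1)).getD i 0 = w.getD i 0 := vc_getD_take (by omega)
        have e2 : (w.take (t+1)).getD (i+1) 0 = w.getD (i+1) 0 := vc_getD_take (by omega)
        rw [e1, e2]
        exact hasc i hi
    · rw [descLt_mem]
      have hAlen : (w.take (t+1)).length = t + 1 := by rw [List.length_take]; omega
      have hAne : w.take (t+1) ≠ [] := by
        intro h; rw [h] at hAlen; simp at hAlen
      have hm : (w.take (t+1)).getLastD 0 = w.getD t 0 := by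
        rw [vc_getLastD _ hAne, hAlen]
        have e : t + 1 - 1 = t := by omega
        rw [e, vc_getD_take (by omega)]
      rw [hm]
      refine ⟨by rw [List.length_drop]; omega, ?_, ?_⟩
      · intro i hi
        rw [vc_getD_drop, vc_getD_drop]
        have h1 : t + 1 + (i+1) = (t + 1 + i) + 1 := by omega
        rw [h1]
        exact hdesc (t+1+i) (by omega) (by omega)
      · intro i hi
        rw [vc_getD_drop]
        have htN : t < N := by omega
        have h2 : w.getD (t+1+i) 0 ≤ w.getD (t+1) 0 :=
          vc_desc_chain hdesc (t+1) (t+1+i) (by omega) (by omega) (by omega)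
        exact lt_of_le_of_lt h2 (hstrict htN)

lemma valleys_eq_zero_iff (w : List ℕ) : valleys w = 0 ↔
    ∀ l, 1 ≤ l → l ≤ w.length → ∀ i < w.length,
      ¬(i + l + 1 < w.length ∧ w.getD (i+1) 0 < w.getD i 0 ∧
        (∀ j, j < l → w.getD (i+1+j) 0 = w.getD (i+1) 0) ∧
        w.getD (i+l+1) 0 = w.getD (i+1) 0 + 1) := by
  unfold valleys lValleys
  rw [Finset.sum_eq_zero_iff]
  constructor
  · intro h l h1 h2 i hi hpred
    have hl := h l (Finset.mem_Icc.mpr ⟨h1, h2⟩)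
    rw [Finset.card_eq_zero, Finset.filter_eq_empty_iff] at hl
    exact hl (Finset.mem_range.mpr hi) hpred
  · intro h l hl
    rw [Finset.card_eq_zero, Finset.filter_eq_empty_iff]
    rw [Finset.mem_Icc] at hl
    intro i hi
    exact h l hl.1 hl.2 i (Finset.mem_range.mp hi)

lemma struct_iff {N : ℕ} {w : List ℕ} :
    Struct N w ↔ (w ∈ CatalanWord (N+1) ∧ valleys w = 0) := by
  constructor
  · rintro ⟨hlen, h0, t, ht, hasc, hdesc, hstrict⟩
    constructor
    · refine ⟨hlen, h0, ?_⟩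
      intro i hi
      by_cases hit : i < t
      · exact (hasc i hit).2
      · exact le_trans (hdesc i (by omega) (by omega)) (by omega)
    · rw [valleys_eq_zero_iff]
      rintro l h1 h2 i hi ⟨hb, hdec, hplat, hup⟩
      have hti : t ≤ i := by
        by_contra hlt
        have := (hasc i (by omega)).1
        omega
      have hch : w.getD (i+l+1) 0 ≤ w.getD (i+1) 0 :=
        vc_desc_chain hdesc (i+1) (i+l+1) (by omega) (by omega) (by omega)
      omega
  · rintro ⟨⟨hlen, h0, hcat⟩, hval⟩
    refine ⟨hlen, h0, ?_⟩
    rw [valleys_eq_zero_iff] at hval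
    classical
    by_cases hex : ∃ i, i < N ∧ w.getD (i+1) 0 < w.getD i 0
    · have hspec := Nat.find_spec hex
      set t := Nat.find hex with htdef
      obtain ⟨htN, htd⟩ := hspec
      refine ⟨t, by omega, ?_, ?_, fun _ => htd⟩
      · intro i hi
        have hmin := Nat.find_min hex hi
        rw [not_and] at hmin
        have h2 := hmin (by omega)
        exact ⟨by omega, hcat i (by omega)⟩
      · by_contra hnd
        push_neg at hnd
        obtain ⟨i, hti, hiN, hasc'⟩ := hnd
        have hti' : t < i := by
          by_contra hcon
          have heq : i = t := by omega
          subst heq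
          omega
        have hexQ : ∃ j, t < j ∧ j < N ∧ w.getD j 0 < w.getD (j+1) 0 :=
          ⟨i, hti', hiN, by omega⟩
        have hspecQ := Nat.find_spec hexQ
        set j0 := Nat.find hexQ with hj0def
        obtain ⟨hj0t, hj0N, hj0a⟩ := hspecQ
        set R : ℕ → Prop := fun a => t ≤ a ∧ a < j0 ∧ w.getD (a+1) 0 < w.getD a 0 with hRdef
        have hRt : R t := ⟨le_rfl, hj0t, htd⟩
        set a0 := Nat.findGreatest R j0 with ha0def
        have ha0 : R a0 := Nat.findGreatest_spec (le_of_lt hj0t) hRt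
        obtain ⟨hta0, ha0j0, ha0d⟩ := ha0
        have hplatd : ∀ d, a0 + 1 + d ≤ j0 → w.getD (a0+1+d) 0 = w.getD (a0+1) 0 := by
          intro d
          induction d with
          | zero => intro _; rfl
          | succ d ih =>
            intro hd
            have ihv := ih (by omega)
            have hnQ : ¬(t < a0+1+d ∧ a0+1+d < N ∧ w.getD (a0+1+d) 0 < w.getD (a0+1+d+1) 0) :=
              Nat.find_min hexQ (by omega)
            have hnR : ¬R (a0+1+d) := Nat.findGreatest_is_greatest (n := j0) (by omega) (by omega)
            rw [hRdef] at hnR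
            simp only [not_and, not_lt] at hnQ hnR
            have hge : w.getD (a0+1+d) 0 ≤ w.getD (a0+1+d+1) 0 := hnR (by omega) (by omega)
            have hle : w.getD (a0+1+d+1) 0 ≤ w.getD (a0+1+d) 0 := hnQ (by omega) (by omega)
            have e : a0 + 1 + (d+1) = (a0+1+d)+1 := by omega
            rw [e]
            omega
        have hplat : ∀ k, a0 + 1 ≤ k → k ≤ j0 → w.getD k 0 = w.getD (a0+1) 0 := by
          intro k h1 h2
          have e : k = a0 + 1 + (k - (a0+1)) := by omega
          rw [e]
          exact hplatd _ (by omega)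
        have hj0eq : w.getD j0 0 = w.getD (a0+1) 0 := hplat j0 (by omega) (by omega)
        have hstep : w.getD (j0+1) 0 = w.getD j0 0 + 1 := by
          have := hcat j0 (by omega)
          omega
        have hl1 : 1 ≤ j0 - a0 := by omega
        have := hval (j0 - a0) hl1 (by omega) a0 (by omega)
        rw [not_and] at this
        apply this (by omega)
        refine ⟨ha0d, ?_, ?_⟩
        · intro j hj
          exact hplat (a0+1+j) (by omega) (by omega)
        · have e : a0 + (j0 - a0) + 1 = j0 + 1 := by omega
          rw [e]
          omega
    · push_neg at hex
      refine ⟨N, le_rfl, ?_, ?_, by omega⟩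
      · intro i hi
        exact ⟨hex i hi, hcat i (by omega)⟩
      · intro i h1 h2
        omega

lemma hockey0 : ∀ (n b : ℕ), ∑ q ∈ Finset.range n, (b + q).choose b = (b + n).choose (b+1)
  | 0, b => by simp
  | (n+1), b => by
    rw [Finset.sum_range_succ, hockey0 n b]
    rw [show b + (n+1) = (b+n) + 1 by omega]
    rw [Nat.choose_succ_succ (b+n) b]
    simp only [Nat.succ_eq_add_one]
    omega

lemma Hlem : ∀ (a N b : ℕ),
    ∑ p ∈ Finset.range (N+1), p.choose a * (b + (N - p)).choose b
      = (N + b + 1).choose (a + b + 1)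
  | 0, N, b => by
    simp only [Nat.choose_zero_right, one_mul]
    rw [← Finset.sum_range_reflect]
    have h : ∀ j ∈ Finset.range (N+1),
        (b + (N - (N + 1 - 1 - j))).choose b = (b + j).choose b := by
      intro j hj; rw [Finset.mem_range] at hj; congr 2; omega
    rw [Finset.sum_congr rfl h, hockey0]
    congr 1 <;> omega
  | (a+1), 0, b => by
    have h0 : ∑ p ∈ Finset.range (0+1), p.choose (a+1) * (b + (0 - p)).choose b = 0 := by
      simp
    rw [h0, Nat.choose_eq_zero_of_lt (show 0 + b + 1 < a+1+b+1 by omega)]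
  | (a+1), (N+1), b => by
    rw [Finset.sum_range_succ' (fun p => p.choose (a+1) * (b + (N + 1 - p)).choose b) (N+1)]
    have h : ∀ p ∈ Finset.range (N+1),
        (p+1).choose (a+1) * (b + (N + 1 - (p+1))).choose b
        = p.choose a * (b + (N - p)).choose b + p.choose (a+1) * (b + (N - p)).choose b := by
      intro p hp
      rw [Nat.choose_succ_succ p a, add_mul]
      simp only [Nat.succ_eq_add_one]
      congr 3 <;> omega
    rw [Finset.sum_congr rfl h, Finset.sum_add_distrib, Hlem a N b, Hlem (a+1) N b]
    rw [Nat.choose_eq_zero_of_lt (show (0:ℕ) < a + 1 by omega), zero_mul, add_zero]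
    rw [show N + 1 + b + 1 = (N + b + 1) + 1 by omega,
      show a + 1 + b + 1 = (a + b + 1) + 1 by omega,
      Nat.choose_succ_succ (N+b+1) (a+b+1)]

lemma pascal_sum (k v : ℕ) (f : ℕ → ℕ) :
    ∑ m ∈ Finset.range (k+2), (k+1).choose m * f (v+m)
      = ∑ m ∈ Finset.range (k+1), k.choose m * f (v+m)
        + ∑ m ∈ Finset.range (k+1), k.choose m * f (v+1+m) := by
  rw [Finset.sum_range_succ' (fun m => (k+1).choose m * f (v+m)) (k+1)]
  have e1 : ∑ m ∈ Finset.range (k+1), (k+1).choose (m+1) * f (v+(m+1))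
      = (∑ m ∈ Finset.range (k+1), k.choose (m+1) * f (v+(m+1)))
        + ∑ m ∈ Finset.range (k+1), k.choose m * f (v+1+m) := by
    rw [← Finset.sum_add_distrib]
    refine Finset.sum_congr rfl fun m _ => ?_
    rw [Nat.choose_succ_succ k m, add_mul]
    simp only [Nat.succ_eq_add_one]
    rw [show v + 1 + m = v + (m+1) by omega]
    ring
  rw [e1]
  have e2 : (∑ m ∈ Finset.range (k+1), k.choose (m+1) * f (v+(m+1)))
      + (k+1).choose 0 * f (v+0)
      = ∑ m ∈ Finset.range (k+1), k.choose m * f (v+m) := by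
    have h3 := Finset.sum_range_succ' (fun m => k.choose m * f (v+m)) (k+1)
    rw [Finset.sum_range_succ (fun m => k.choose m * f (v+m)) (k+1)] at h3
    rw [Nat.choose_succ_self, zero_mul, add_zero] at h3
    simp only [Nat.choose_zero_right, one_mul] at h3 ⊢
    omega
  omega

lemma main_sum (N : ℕ) :
    (∑ t ∈ Finset.range (N+1), ∑ m ∈ Finset.range (t+1),
        t.choose m * ((m + (N - t) - 1).choose (N - t)))
    = ∑ m ∈ Finset.range (N+1), (N + m).choose (2*m) := by
  have h1 : ∀ t ∈ Finset.range (N+1),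
      ∑ m ∈ Finset.range (t+1), t.choose m * ((m + (N - t) - 1).choose (N - t))
      = ∑ m ∈ Finset.range (N+1), t.choose m * ((m + (N - t) - 1).choose (N - t)) := by
    intro t ht
    rw [Finset.mem_range] at ht
    refine Finset.sum_subset ?_ ?_
    · intro m hm; rw [Finset.mem_range] at *; omega
    · intro m _ hm2
      rw [Finset.mem_range, not_lt] at hm2
      rw [Nat.choose_eq_zero_of_lt (by omega), zero_mul]
  rw [Finset.sum_congr rfl h1, Finset.sum_comm]
  refine Finset.sum_congr rfl fun m hm => ?_
  rw [Finset.mem_range] at hm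
  rcases m with _ | b
  · simp only [Nat.choose_zero_right, one_mul, Nat.zero_add, Nat.mul_zero]
    rw [Finset.sum_eq_single N]
    · simp
    · intro t ht hne
      rw [Finset.mem_range] at ht
      have h2 : 1 ≤ N - t := by omega
      exact Nat.choose_eq_zero_of_lt (by omega)
    · intro h; exact absurd (Finset.self_mem_range_succ N) h
  · have hterm : ∀ t ∈ Finset.range (N+1),
        t.choose (b+1) * ((b + 1 + (N - t) - 1).choose (N - t))
        = t.choose (b+1) * ((b + (N - t)).choose b) := by
      intro t _
      congr 1
      rw [show b + 1 + (N - t) - 1 = b + (N - t) by omega]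
      have h4 := Nat.choose_symm (show N - t ≤ b + (N - t) by omega)
      rw [show b + (N - t) - (N - t) = b by omega] at h4
      exact h4.symm
    rw [Finset.sum_congr rfl hterm, Hlem (b+1) N b]
    congr 1 <;> omega

lemma fibsum : ∀ N : ℕ,
    (∑ m ∈ Finset.range (N+1), (N+m).choose (2*m) = Nat.fib (2*N+1))
    ∧ (∑ m ∈ Finset.range (N+1), (N+m).choose (2*m+1) = Nat.fib (2*N)) := by
  intro N
  induction N with
  | zero => simp
  | succ N ih =>
    obtain ⟨hT, hU⟩ := ih
    have hU1 : ∑ m ∈ Finset.range (N+2), (N+1+m).choose (2*m+1) = Nat.fib (2*(N+1)) := by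
      have h : ∀ m ∈ Finset.range (N+2), (N+1+m).choose (2*m+1)
          = (N+m).choose (2*m) + (N+m).choose (2*m+1) := by
        intro m _
        rw [show N + 1 + m = (N+m) + 1 by omega]
        exact Nat.choose_succ_succ (N+m) (2*m)
      rw [Finset.sum_congr rfl h, Finset.sum_add_distrib]
      rw [Finset.sum_range_succ (fun m => (N+m).choose (2*m)) (N+1),
        Finset.sum_range_succ (fun m => (N+m).choose (2*m+1)) (N+1)]
      rw [Nat.choose_eq_zero_of_lt (show N+(N+1) < 2*(N+1) by omega),
        Nat.choose_eq_zero_of_lt (show N+(N+1) < 2*(N+1)+1 by omega)]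
      rw [add_zero, add_zero, hT, hU]
      rw [show 2*(N+1) = (2*N) + 2 by omega, Nat.fib_add_two]
      omega
    constructor
    · rw [Finset.sum_range_succ' (fun m => (N+1+m).choose (2*m)) (N+1)]
      have h : ∀ m ∈ Finset.range (N+1), (N+1+(m+1)).choose (2*(m+1))
          = (N+1+m).choose (2*m+1) + (N+1+m).choose (2*m+2) := by
        intro m _
        rw [show N + 1 + (m+1) = (N+1+m) + 1 by omega,
          show 2*(m+1) = (2*m+1) + 1 by omega]
        exact Nat.choose_succ_succ (N+1+m) (2*m+1)
      rw [Finset.sum_congr rfl h, Finset.sum_add_distrib]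
      -- first summand = U(N+1) trimmed
      have hU1' : ∑ m ∈ Finset.range (N+1), (N+1+m).choose (2*m+1) = Nat.fib (2*(N+1)) := by
        rw [← hU1, Finset.sum_range_succ (fun m => (N+1+m).choose (2*m+1)) (N+1)]
        rw [Nat.choose_eq_zero_of_lt (show N+1+(N+1) < 2*(N+1)+1 by omega), add_zero]
      -- second summand + 1 = T(N)
      have hV : (∑ m ∈ Finset.range (N+1), (N+1+m).choose (2*m+2)) + 1
          = Nat.fib (2*N+1) := by
        rw [← hT]
        have h5 := Finset.sum_range_succ' (fun m => (N+m).choose (2*m)) (N+1)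
        rw [Finset.sum_range_succ (fun m => (N+m).choose (2*m)) (N+1)] at h5
        rw [Nat.choose_eq_zero_of_lt (show N+(N+1) < 2*(N+1) by omega), add_zero] at h5
        rw [h5]
        have h6 : ∀ m ∈ Finset.range (N+1), (N+(m+1)).choose (2*(m+1))
            = (N+1+m).choose (2*m+2) := by
          intro m _; congr 1 <;> omega
        rw [Finset.sum_congr rfl h6]
        simp
      rw [hU1']
      have hfib : Nat.fib (2*(N+1)+1) = Nat.fib (2*(N+1)) + Nat.fib (2*N+1) := by
        rw [show 2*(N+1)+1 = (2*N+1) + 2 by omega, Nat.fib_add_two,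
          show 2*N+1+1 = 2*(N+1) by omega]
        omega
      simp only [Nat.mul_zero, Nat.choose_zero_right]
      omega
    · exact hU1

lemma descF_card : ∀ (r b : ℕ), (descF b r).card = (b + r).choose r
  | 0, b => by simp [descF]
  | (r+1), b => by
    show ((Finset.range (b+1)).biUnion fun v => (descF v r).image (v :: ·)).card = _
    rw [Finset.card_biUnion]
    · have h : ∀ v ∈ Finset.range (b+1),
          ((descF v r).image (v :: ·)).card = (r + v).choose r := by
        intro v _
        rw [Finset.card_image_of_injective _ (List.cons_injective), descF_card r v]
        congr 1; omega
      rw [Finset.sum_congr rfl h, hockey0 (b+1) r]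
      congr 1; omega
    · intro x hx y hy hxy
      rw [Function.onFun, Finset.disjoint_left]
      rintro w hwx hwy
      obtain ⟨Dx, -, rfl⟩ := Finset.mem_image.mp hwx
      obtain ⟨Dy, -, heq⟩ := Finset.mem_image.mp hwy
      simp only [List.cons.injEq] at heq
      exact hxy (heq.1.symm ▸ rfl)

lemma descLt_card : ∀ (r m : ℕ), (descLt m r).card = (m + r - 1).choose r
  | 0, m => by simp [descLt]
  | (r+1), m => by
    show ((Finset.range m).biUnion fun v => (descF v r).image (v :: ·)).card = _
    rw [Finset.card_biUnion]
    · have h : ∀ v ∈ Finset.range m,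
          ((descF v r).image (v :: ·)).card = (r + v).choose r := by
        intro v _
        rw [Finset.card_image_of_injective _ (List.cons_injective), descF_card r v]
        congr 1; omega
      rw [Finset.sum_congr rfl h, hockey0 m r]
      congr 1; omega
    · intro x hx y hy hxy
      rw [Function.onFun, Finset.disjoint_left]
      rintro w hwx hwy
      obtain ⟨Dx, -, rfl⟩ := Finset.mem_image.mp hwx
      obtain ⟨Dy, -, heq⟩ := Finset.mem_image.mp hwy
      simp only [List.cons.injEq] at heq
      exact hxy (heq.1.symm ▸ rfl)

lemma vc_getLastD_default {l : List ℕ} (h : l ≠ []) (a b : ℕ) : l.getLastD a = l.getLastD b := by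
  rw [List.getLastD_eq_getLast?, List.getLastD_eq_getLast?, List.getLast?_eq_getElem?]
  have hl : l.length - 1 < l.length := by
    have := List.length_pos_iff.mpr h; omega
  rw [List.getElem?_eq_getElem hl]
  simp

lemma ascF_ne_nil {v k : ℕ} {A : List ℕ} (h : A ∈ ascF v k) : A ≠ [] := by
  have hl := ((ascF_mem k v A).mp h).1
  intro he; rw [he] at hl; simp at hl

lemma ascF_disj (v k : ℕ) : Disjoint (ascF v k) (ascF (v+1) k) := by
  rw [Finset.disjoint_left]
  intro A h1 h2
  have e1 := ((ascF_mem k v A).mp h1).2.1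
  have e2 := ((ascF_mem k (v+1) A).mp h2).2.1
  omega

lemma asc_sum : ∀ (k v : ℕ) (f : ℕ → ℕ),
    ∑ A ∈ ascF v k, f (A.getLastD 0) = ∑ m ∈ Finset.range (k+1), k.choose m * f (v + m)
  | 0, v, f => by simp [ascF]
  | (k+1), v, f => by
    show ∑ A ∈ ((ascF v k) ∪ (ascF (v+1) k)).image (v :: ·), f (A.getLastD 0) = _
    rw [Finset.sum_image (by
      intro x _ y _ hxy
      exact List.cons_injective hxy)]
    have hrw : ∀ rest ∈ (ascF v k) ∪ (ascF (v+1) k),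
        f ((v :: rest).getLastD 0) = f (rest.getLastD 0) := by
      intro rest hrest
      have hne : rest ≠ [] := by
        rcases Finset.mem_union.mp hrest with h | h
        exacts [ascF_ne_nil h, ascF_ne_nil h]
      rw [List.getLastD_cons, vc_getLastD_default hne v 0]
    rw [Finset.sum_congr rfl hrw, Finset.sum_union (ascF_disj v k),
      asc_sum k v f, asc_sum k (v+1) f, ← pascal_sum k v f]

lemma piece_facts {N t : ℕ} {w : List ℕ} (htN : t ≤ N)
    (hw : w ∈ (ascF 0 t).biUnion fun A =>
      (descLt (A.getLastD 0) (N - t)).image (fun D => A ++ D)) :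
    (∀ i < t, w.getD i 0 ≤ w.getD (i+1) 0) ∧ (t < N → w.getD (t+1) 0 < w.getD t 0) := by
  rw [Finset.mem_biUnion] at hw
  obtain ⟨A, hA, hw⟩ := hw
  rw [Finset.mem_image] at hw
  obtain ⟨D, hD, rfl⟩ := hw
  rw [ascF_mem] at hA
  obtain ⟨hAlen, hA0, hAstep⟩ := hA
  rw [descLt_mem] at hD
  obtain ⟨hDlen, hDanti, hDlt⟩ := hD
  have hAne : A ≠ [] := by intro h; rw [h] at hAlen; simp at hAlen
  have hm : A.getLastD 0 = A.getD t 0 := by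
    rw [vc_getLastD A hAne, hAlen]; norm_num
  rw [hm] at hDlt
  constructor
  · intro i hi
    have e1 : (A ++ D).getD i 0 = A.getD i 0 := vc_getD_append_left (by omega)
    have e2 : (A ++ D).getD (i+1) 0 = A.getD (i+1) 0 := vc_getD_append_left (by omega)
    rw [e1, e2]
    exact (hAstep i hi).1
  · intro hlt
    have e1 : (A ++ D).getD t 0 = A.getD t 0 := vc_getD_append_left (by omega)
    have e2 : (A ++ D).getD (t+1) 0 = D.getD (t + 1 - A.length) 0 :=
      vc_getD_append_right (by omega)
    have e3 : t + 1 - A.length = 0 := by omega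
    rw [e1, e2, e3]
    exact hDlt 0 (by omega)

lemma WF_card (N : ℕ) : (WF N).card
    = ∑ t ∈ Finset.range (N+1), ∑ m ∈ Finset.range (t+1),
        t.choose m * ((m + (N - t) - 1).choose (N - t)) := by
  unfold WF
  rw [Finset.card_biUnion]
  · refine Finset.sum_congr rfl fun t ht => ?_
    rw [Finset.mem_range] at ht
    rw [Finset.card_biUnion]
    · have h : ∀ A ∈ ascF 0 t, ((descLt (A.getLastD 0) (N-t)).image (fun D => A ++ D)).card
          = (A.getLastD 0 + (N-t) - 1).choose (N-t) := by
        intro A _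
        rw [Finset.card_image_of_injective _ (List.append_right_injective A),
          descLt_card (N-t) (A.getLastD 0)]
      rw [Finset.sum_congr rfl h]
      have h2 := asc_sum t 0 (fun m => (m + (N-t) - 1).choose (N-t))
      simp only [Nat.zero_add] at h2
      exact h2
    · -- inner disjointness over A
      intro A hA A' hA' hne
      rw [Function.onFun, Finset.disjoint_left]
      intro w hw hw'
      obtain ⟨D, -, rfl⟩ := Finset.mem_image.mp hw
      obtain ⟨D', -, heq⟩ := Finset.mem_image.mp hw'
      have hl : A'.length = A.length := by
        rw [((ascF_mem t 0 A).mp hA).1, ((ascF_mem t 0 A').mp hA').1]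
      exact hne ((List.append_inj heq hl).1.symm)
  · -- outer disjointness over t
    have key : ∀ x y, x < N + 1 → y < N + 1 → x < y → ∀ w,
        w ∈ (ascF 0 x).biUnion (fun A => (descLt (A.getLastD 0) (N - x)).image (fun D => A ++ D)) →
        w ∈ (ascF 0 y).biUnion (fun A => (descLt (A.getLastD 0) (N - y)).image (fun D => A ++ D)) →
        False := by
      intro x y hx hy hxy w hwx hwy
      have f1 := piece_facts (by omega) hwx
      have f2 := piece_facts (by omega) hwy
      have h1 := f1.2 (by omega)
      have h2 := f2.1 x (by omega)
      omega
    intro x hx y hy hxy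
    rw [Finset.mem_coe, Finset.mem_range] at hx hy
    rw [Function.onFun, Finset.disjoint_left]
    intro w hwx hwy
    rcases Nat.lt_or_ge x y with h | h
    · exact key x y hx hy h w hwx hwy
    · exact key y x hy hx (by omega) w hwy hwx

/-- The number of Catalan words of length `n` with no valleys is the Fibonacci number
`F_{2n-1}` (with `F_1 = F_2 = 1`). -/
theorem valleyless_count_eq_fib (n : ℕ) (hn : 1 ≤ n) :
    Nat.card {w : List ℕ | w ∈ CatalanWord n ∧ valleys w = 0} =
      Nat.fib (2 * n - 1) := by
  obtain ⟨N, rfl⟩ : ∃ N, n = N + 1 := ⟨n - 1, by omega⟩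
  have hset : {w : List ℕ | w ∈ CatalanWord (N+1) ∧ valleys w = 0} = ↑(WF N) := by
    ext w
    rw [Finset.mem_coe, WF_mem_struct, struct_iff]
    rfl
  rw [hset, Nat.card_coe_set_eq, Set.ncard_coe_finset, WF_card, main_sum,
    (fibsum N).1]
  congr 1
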